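/- Let M be a real Hilbert space, C ∈ L(M) positive self-adjoint with positive square root C^{1/2}, H ∈ L(M) positive self-adjoint, and f ∈ M. Define Cpost = C^{1/2}(I + H)⁻¹C^{1/2} and Cpost' = C^{1/2}(I + H + f ⊗ f)⁻¹C^{1/2}. Then for every v ∈ M, ⟪v, (Cpost - Cpost')v⟫ = ⟪v, C^{1/2} z⟫² / (1 + ⟪f, z⟫) where z = (I + H)⁻¹ f; in particular Cpost' ≤ Cpost in the Loewner order. -/

import Mathlib

open scoped RealInnerProductSpace

/-- The rank-one operator `u ⊗ v : x ↦ ⟪v, x⟫ u` on a real inner product space. -/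
noncomputable def rankOne {M : Type*} [NormedAddCommGroup M] [InnerProductSpace ℝ M]
    (u v : M) : M →L[ℝ] M := (innerSL ℝ v).smulRight u

lemma rankOne_apply {M : Type*} [NormedAddCommGroup M] [InnerProductSpace ℝ M]
    (u v x : M) : rankOne u v x = ⟪v, x⟫ • u := rfl

/-- **Posterior covariance decrease from one added sensor.** Let `C, H` be positive
self-adjoint bounded operators on a real Hilbert space `M`, with `R` the positive square root
of `C` (`R` positive self-adjoint, `R * R = C`), and `f ∈ M`. With
`Cpost = C^{1/2} (I + H)⁻¹ C^{1/2}`, `Cpost' = C^{1/2} (I + H + f ⊗ f)⁻¹ C^{1/2}`, and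
`z = (I + H)⁻¹ f`, we have `⟪v, (Cpost - Cpost') v⟫ = ⟪v, C^{1/2} z⟫² / (1 + ⟪f, z⟫)` for every
`v`, and in particular `Cpost' ≤ Cpost` in the Loewner order, i.e. `Cpost - Cpost'` is
positive self-adjoint. -/
theorem posterior_covariance_update {M : Type*} [NormedAddCommGroup M] [InnerProductSpace ℝ M]
    [CompleteSpace M] (C H : M →L[ℝ] M) (hC : C.IsPositive) (hH : H.IsPositive)
    (R : M →L[ℝ] M) (hR : R.IsPositive) (hRsq : R * R = C) (f : M) :
    (∀ v : M,
      ⟪v, ((R * Ring.inverse (1 + H) * R) - (R * Ring.inverse (1 + H + rankOne f f) * R)) v⟫ =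
        ⟪v, R ((Ring.inverse (1 + H)) f)⟫ ^ 2 / (1 + ⟪f, (Ring.inverse (1 + H)) f⟫)) ∧
      ((R * Ring.inverse (1 + H) * R) -
        (R * Ring.inverse (1 + H + rankOne f f) * R)).IsPositive := by
  set A : M →L[ℝ] M := 1 + H with hA
  have hHx : ∀ x : M, 0 ≤ ⟪H x, x⟫ := fun x => by
    simpa [ContinuousLinearMap.reApplyInnerSelf_apply] using hH.2 x
  have hApos : A.IsPositive := ContinuousLinearMap.isPositive_one.add hH
  have hAsa : IsSelfAdjoint A := hApos.isSelfAdjoint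
  have hAunit : IsUnit A := by
    apply ContinuousLinearMap.isUnit_of_forall_le_norm_inner_map A (c := 1) one_pos
    intro x
    have h1 : ⟪A x, x⟫ = ‖x‖ ^ 2 + ⟪H x, x⟫ := by
      simp [hA, ContinuousLinearMap.add_apply, inner_add_left,
        real_inner_self_eq_norm_sq]
    have h2 : ‖x‖ ^ 2 ≤ ⟪A x, x⟫ := by
      rw [h1]; linarith [hHx x]
    calc ‖x‖ ^ 2 * 1 = ‖x‖ ^ 2 := mul_one _
      _ ≤ ⟪A x, x⟫ := h2
      _ ≤ ‖⟪A x, x⟫‖ := le_abs_self _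
  set iA : M →L[ℝ] M := Ring.inverse A with hiA
  have hApp1 : ∀ x, A (iA x) = x := fun x => by
    have := congrArg (fun T : M →L[ℝ] M => T x) (Ring.mul_inverse_cancel A hAunit)
    simpa using this
  have hApp2 : ∀ x, iA (A x) = x := fun x => by
    have := congrArg (fun T : M →L[ℝ] M => T x) (Ring.inverse_mul_cancel A hAunit)
    simpa using this
  have hiAsa : IsSelfAdjoint iA := by
    have : star iA = iA := by rw [hiA, ← Ring.inverse_star, hAsa.star_eq]
    exact this
  have hiAsymm := hiAsa.isSymmetric
  have hRsymm := hR.1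
  set z : M := iA f with hz
  have hAz : A z = f := hApp1 f
  have hfz : 0 ≤ ⟪f, z⟫ := by
    have : ⟪f, z⟫ = ⟪A z, z⟫ := by rw [hAz]
    rw [this]
    have := hHx z
    simp only [hA, ContinuousLinearMap.add_apply, inner_add_left,
      ContinuousLinearMap.one_apply] at *
    nlinarith [real_inner_self_nonneg (x := z)]
  set d : ℝ := 1 + ⟪f, z⟫ with hd
  have hd0 : 0 < d := by rw [hd]; linarith
  set Binv : M →L[ℝ] M := iA - d⁻¹ • rankOne z z with hBinv
  set B : M →L[ℝ] M := A + rankOne f f with hB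
  have hfiAx : ∀ x, ⟪f, iA x⟫ = ⟪z, x⟫ := fun x => (hiAsymm f x).symm
  have hB1 : B * Binv = 1 := by
    ext x
    simp only [ContinuousLinearMap.mul_apply, ContinuousLinearMap.one_apply, hB, hBinv,
      ContinuousLinearMap.add_apply, ContinuousLinearMap.sub_apply,
      ContinuousLinearMap.smul_apply, rankOne_apply, map_sub, map_smul,
      inner_sub_right, inner_smul_right, hApp1, hAz, hfiAx]
    have hc : ⟪z, f⟫ = ⟪f, z⟫ := real_inner_comm f z
    match_scalars <;> field_simp <;> ring
  have hB2 : Binv * B = 1 := by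
    ext x
    simp only [ContinuousLinearMap.mul_apply, ContinuousLinearMap.one_apply, hB, hBinv,
      ContinuousLinearMap.add_apply, ContinuousLinearMap.sub_apply,
      ContinuousLinearMap.smul_apply, rankOne_apply, map_add, map_smul,
      inner_add_right, inner_smul_right, hApp2]
    have hc : ⟪z, f⟫ = ⟪f, z⟫ := real_inner_comm f z
    have hc2 : ∀ x, iA (rankOne f f x) = ⟪f, x⟫ • z := fun x => by
      rw [rankOne_apply, map_smul]
    have hzAx : ∀ x, ⟪z, A x⟫ = ⟪f, x⟫ := fun x => by
      simpa [hAz] using (hAsa.isSymmetric z x).symm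
    simp only [hc2, hzAx, hc, inner_smul_right]
    match_scalars <;> field_simp <;> ring
  have hBunit : IsUnit B := ⟨⟨B, Binv, hB1, hB2⟩, rfl⟩
  have hiB : Ring.inverse B = Binv := by
    rw [show B = ((⟨B, Binv, hB1, hB2⟩ : (M →L[ℝ] M)ˣ) : M →L[ℝ] M) from rfl,
      Ring.inverse_unit]
    rfl
  have hD : (R * iA * R) - (R * Ring.inverse B * R) = d⁻¹ • rankOne (R z) (R z) := by
    ext x
    have hzRx : ⟪z, R x⟫ = ⟪R z, x⟫ := by
      simpa using (hRsymm z x).symm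
    simp only [hiB, hBinv, ContinuousLinearMap.sub_apply, ContinuousLinearMap.mul_apply,
      ContinuousLinearMap.smul_apply, rankOne_apply, map_sub, map_smul, hzRx]
    module
  constructor
  · intro v
    rw [hD]
    simp only [ContinuousLinearMap.smul_apply, rankOne_apply, inner_smul_right,
      real_inner_comm (R z) v]
    rw [div_eq_mul_inv]
    ring
  · rw [hD]
    constructor
    · intro x y
      simp only [ContinuousLinearMap.coe_coe, ContinuousLinearMap.smul_apply, rankOne_apply,
        inner_smul_left, inner_smul_right, real_inner_smul_left, real_inner_smul_right,
        starRingEnd_apply, star_trivial]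
      rw [real_inner_comm x (R z)]
      ring
    · intro x
      have hres : (d⁻¹ • rankOne (R z) (R z)).reApplyInnerSelf x
          = d⁻¹ * (⟪R z, x⟫ * ⟪R z, x⟫) := by
        simp only [ContinuousLinearMap.reApplyInnerSelf_apply,
          ContinuousLinearMap.smul_apply, rankOne_apply, real_inner_smul_left,
          RCLike.re_to_real]
      rw [hres]
      exact mul_nonneg (inv_nonneg.mpr hd0.le) (mul_self_nonneg _)
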